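/- Let $b_1,\dots,b_K > 0$ and $c_1,\dots,c_K > 0$ and $T > 0$. Then for any nonnegative integers $n_1,\dots,n_K$ with $\sum_{i=1}^K n_i = T$, we have $\sum_{i=1}^K \sum_{t=1}^{n_i} \frac{b_i c_i}{t + b_i} \le \sum_{i=1}^K b_i c_i \log\left(\frac{c_i(T + \sum_{j=1}^K b_j)}{\sum_{j=1}^K b_j c_j}\right)$. -/

import Mathlib

lemma harm_log (b : ℝ) (hb : 0 < b) (n : ℕ) :
    ∑ t ∈ Finset.range n, 1 / ((t + 1 : ℝ) + b) ≤ Real.log (((n : ℝ) + b) / b) := by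
  induction n with
  | zero => simp [div_self hb.ne']
  | succ n ih =>
      rw [Finset.sum_range_succ]
      have h1 : (0:ℝ) < (n : ℝ) + b := by positivity
      have h2 : (0:ℝ) < ((n:ℕ)+1 : ℝ) + b := by positivity
      have key : 1 / (((n:ℕ) + 1 : ℝ) + b) ≤
          Real.log ((((n:ℕ)+1 : ℝ) + b) / ((n:ℝ) + b)) := by
        have hx : (0:ℝ) < ((n:ℝ) + b) / (((n:ℕ)+1:ℝ) + b) := by positivity
        have := Real.log_le_sub_one_of_pos hx
        have hlog : Real.log (((n:ℝ) + b) / (((n:ℕ)+1:ℝ) + b)) =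
            - Real.log ((((n:ℕ)+1 : ℝ) + b) / ((n:ℝ) + b)) := by
          rw [Real.log_div h1.ne' h2.ne', Real.log_div h2.ne' h1.ne']; ring
        rw [hlog] at this
        have : 1 - ((n:ℝ) + b) / (((n:ℕ)+1:ℝ) + b) ≤
            Real.log ((((n:ℕ)+1 : ℝ) + b) / ((n:ℝ) + b)) := by linarith
        calc 1 / (((n:ℕ) + 1 : ℝ) + b)
            = 1 - ((n:ℝ) + b) / (((n:ℕ)+1:ℝ) + b) := by
              field_simp
              ring
          _ ≤ _ := this
      have heq : Real.log ((((n:ℕ)+1 : ℝ) + b) / b) =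
          Real.log (((n:ℝ) + b) / b) + Real.log ((((n:ℕ)+1 : ℝ) + b) / ((n:ℝ) + b)) := by
        rw [Real.log_div h1.ne' hb.ne', Real.log_div h2.ne' hb.ne',
          Real.log_div h2.ne' h1.ne']; ring
      push_cast at *
      linarith

theorem stmt_8 (K : ℕ) (b c : Fin K → ℝ)
    (hb : ∀ i, 0 < b i) (hc : ∀ i, 0 < c i)
    (T : ℕ) (hT : 0 < T) (n : Fin K → ℕ) (hn : ∑ i, n i = T) :
    ∑ i, ∑ t ∈ Finset.range (n i), b i * c i / ((t + 1 : ℝ) + b i) ≤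
      ∑ i, b i * c i *
        Real.log (c i * ((T : ℝ) + ∑ j, b j) / (∑ j, b j * c j)) := by
  have hK : 0 < K := by
    by_contra h
    have : K = 0 := by omega
    subst this
    simp at hn
    omega
  set S : ℝ := (T : ℝ) + ∑ j, b j with hS
  set B : ℝ := ∑ j, b j * c j with hB
  have hSb : (0:ℝ) < ∑ j, b j := Finset.sum_pos (fun i _ => hb i) (by simp [Finset.univ_nonempty_iff]; exact Fin.pos_iff_nonempty.mp hK)
  have hSpos : 0 < S := by
    have : (0:ℝ) < T := by exact_mod_cast hT
    positivity
  have hBpos : 0 < B := Finset.sum_pos (fun i _ => mul_pos (hb i) (hc i)) (by simp [Finset.univ_nonempty_iff]; exact Fin.pos_iff_nonempty.mp hK)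
  -- step 1
  have step1 : ∀ i, ∑ t ∈ Finset.range (n i), b i * c i / ((t + 1 : ℝ) + b i) ≤
      b i * c i * Real.log (((n i : ℝ) + b i) / b i) := by
    intro i
    have := harm_log (b i) (hb i) (n i)
    calc ∑ t ∈ Finset.range (n i), b i * c i / ((t + 1 : ℝ) + b i)
        = b i * c i * ∑ t ∈ Finset.range (n i), 1 / ((t + 1 : ℝ) + b i) := by
          rw [Finset.mul_sum]; apply Finset.sum_congr rfl; intros; ring
      _ ≤ _ := by
          apply mul_le_mul_of_nonneg_left this (le_of_lt (mul_pos (hb i) (hc i)))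
  refine le_trans (Finset.sum_le_sum (fun i _ => step1 i)) ?_
  -- step 2
  have step2 : ∀ i, b i * c i * Real.log (((n i : ℝ) + b i) / b i) ≤
      b i * c i * Real.log (c i * S / B) + ((n i : ℝ) + b i) * B / S - b i * c i := by
    intro i
    have hbi := hb i; have hci := hc i
    have hx : (0:ℝ) < ((n i : ℝ) + b i) / b i := by positivity
    have hy : (0:ℝ) < c i * S / B := by positivity
    have hz : (0:ℝ) < (((n i : ℝ) + b i) / b i) / (c i * S / B) := by positivity
    have hlog := Real.log_le_sub_one_of_pos hz
    rw [Real.log_div hx.ne' hy.ne'] at hlog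
    have hzval : (((n i : ℝ) + b i) / b i) / (c i * S / B) =
        ((n i : ℝ) + b i) * B / (b i * c i * S) := by
      field_simp
    rw [hzval] at hlog
    have h1 : b i * c i * (Real.log (((n i : ℝ) + b i) / b i) - Real.log (c i * S / B)) ≤
        b i * c i * (((n i : ℝ) + b i) * B / (b i * c i * S) - 1) :=
      mul_le_mul_of_nonneg_left hlog (by positivity)
    have h2 : b i * c i * (((n i : ℝ) + b i) * B / (b i * c i * S) - 1) =
        ((n i : ℝ) + b i) * B / S - b i * c i := by
      field_simp
    linarith [h1, h2 ▸ h1]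
  refine le_trans (Finset.sum_le_sum (fun i _ => step2 i)) ?_
  have hsum : ∑ i, (b i * c i * Real.log (c i * S / B) + ((n i : ℝ) + b i) * B / S - b i * c i)
      = ∑ i, b i * c i * Real.log (c i * S / B) + (∑ i, ((n i : ℝ) + b i)) * B / S - B := by
    rw [Finset.sum_sub_distrib, Finset.sum_add_distrib, ← Finset.sum_div, ← Finset.sum_mul]
  rw [hsum]
  have hns : ∑ i, ((n i : ℝ) + b i) = S := by
    rw [Finset.sum_add_distrib, hS]
    congr 1
    rw [← hn]; push_cast; ring
  rw [hns]
  have hSS : S * B / S = B := by field_simp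
  rw [hSS]
  simp
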